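/- For every concurrent epistemic game structure M, every coalition A ⊆ Agt, all sets of states P, S ⊆ St, and every state q: if q belongs to the least fixpoint of the monotone operator X ↦ E_A P ∪ (C_A S ∩ ⟨A⟩•X), then M,q ⊨ ⟨⟨A⟩⟩ S U P. (The fixpoint μZ.(E_A φ ∨ (C_A ψ ∧ ⟨A⟩•Z)) is a lower bound for the ATLir 'until' ability.) -/

import Mathlib

/-- A concurrent epistemic game structure (iCGS). -/
structure CEGS where
  Agt : Type
  St : Type
  AP : Type
  Act : Type
  agtFin : Finite Agt
  agtNe : Nonempty Agt
  stNe : Nonempty St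
  actFin : Finite Act
  actNe : Nonempty Act
  V : AP → Set St
  d : Agt → St → Set Act
  d_ne : ∀ a q, (d a q).Nonempty
  o : St → (Agt → Act) → St
  sim : Agt → St → St → Prop
  sim_equiv : ∀ a, Equivalence (sim a)
  uniform : ∀ a q q', sim a q q' → d a q = d a q'

namespace CEGS

variable (M : CEGS)

/-- An action profile available at state `q`. -/
def Avail (q : M.St) (α : M.Agt → M.Act) : Prop := ∀ a, α a ∈ M.d a q

/-- A path: an infinite sequence of states, each next state being the outcome of
some available action profile. -/
def IsPath (lam : ℕ → M.St) : Prop :=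
  ∀ i, ∃ α, M.Avail (lam i) α ∧ lam (i + 1) = M.o (lam i) α

/-- `s` is a collective ir-strategy (uniform, memoryless) for coalition `A`. -/
def IsIrStrat (A : Set M.Agt) (s : M.Agt → M.St → M.Act) : Prop :=
  ∀ a ∈ A, (∀ q, s a q ∈ M.d a q) ∧ (∀ q q', M.sim a q q' → s a q = s a q')

/-- `s` is a collective Ir-strategy (perfect information, memoryless) for coalition `A`. -/
def IsIrStratPI (A : Set M.Agt) (s : M.Agt → M.St → M.Act) : Prop :=
  ∀ a ∈ A, ∀ q, s a q ∈ M.d a q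

/-- `lam ∈ out(q, s_A)`: a path starting at `q` along which every agent of `A` plays `s`. -/
def InOut (A : Set M.Agt) (s : M.Agt → M.St → M.Act) (q : M.St) (lam : ℕ → M.St) : Prop :=
  lam 0 = q ∧ ∀ i, ∃ α, M.Avail (lam i) α ∧ (∀ a ∈ A, α a = s a (lam i)) ∧
    lam (i + 1) = M.o (lam i) α

/-- `lam ∈ out^ir(q, s_A) = ⋃_{a∈A} ⋃_{q ∼_a q'} out(q', s_A)`. -/
def InOutIr (A : Set M.Agt) (s : M.Agt → M.St → M.Act) (q : M.St) (lam : ℕ → M.St) : Prop :=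
  ∃ a ∈ A, ∃ q', M.sim a q q' ∧ M.InOut A s q' lam

/-- The "everybody knows" relation `∼_A^E = ⋃_{a∈A} ∼_a`. -/
def simE (A : Set M.Agt) (q q' : M.St) : Prop := ∃ a ∈ A, M.sim a q q'

/-- The "common knowledge" relation `∼_A^C`: transitive closure of `∼_A^E`. -/
def simC (A : Set M.Agt) : M.St → M.St → Prop := Relation.TransGen (M.simE A)

/-- Individual knowledge: `K_a X`. -/
def Know (a : M.Agt) (X : Set M.St) : Set M.St := {q | ∀ q', M.sim a q q' → q' ∈ X}

/-- Mutual knowledge: `E_A X`. -/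
def EKnow (A : Set M.Agt) (X : Set M.St) : Set M.St := {q | ∀ q', M.simE A q q' → q' ∈ X}

/-- Common knowledge: `C_A X`. -/
def CKnow (A : Set M.Agt) (X : Set M.St) : Set M.St := {q | ∀ q', M.simC A q q' → q' ∈ X}

/-- Next-step operator `⟨A⟩X` (imperfect information). -/
def Next (A : Set M.Agt) (X : Set M.St) : Set M.St :=
  {q | ∃ s, M.IsIrStrat A s ∧ ∀ lam, M.InOutIr A s q lam → lam 1 ∈ X}

/-- `Reach_M(s_A, Q, X)`. -/
def ReachSet (A : Set M.Agt) (s : M.Agt → M.St → M.Act) (Q X : Set M.St) : Set M.St :=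
  {q | q ∈ Q ∧ ∀ lam, M.InOut A s q lam → ∃ i, lam i ∈ X ∧ ∀ j < i, lam j ∈ Q}

/-- Steadfast next-step operator `⟨A⟩•X`. -/
def NextStead (A : Set M.Agt) (X : Set M.St) : Set M.St :=
  {q | ∃ s, M.IsIrStrat A s ∧
    M.ReachSet A s {q' | M.simC A q q'} X = {q' | M.simC A q q'}}

/-- `M,q ⊨ ⟨⟨A⟩⟩◇P` (ATLir reachability, ir-strategies). -/
def CanReach (A : Set M.Agt) (P : Set M.St) (q : M.St) : Prop :=
  ∃ s, M.IsIrStrat A s ∧ ∀ lam, M.InOutIr A s q lam → ∃ i, lam i ∈ P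

/-- `M,q ⊨ ⟨⟨A⟩⟩□P` (ATLir safety, ir-strategies). -/
def CanGlobally (A : Set M.Agt) (P : Set M.St) (q : M.St) : Prop :=
  ∃ s, M.IsIrStrat A s ∧ ∀ lam, M.InOutIr A s q lam → ∀ i, lam i ∈ P

/-- `M,q ⊨ ⟨⟨A⟩⟩ S U P` (ATLir until, ir-strategies). -/
def CanUntil (A : Set M.Agt) (S P : Set M.St) (q : M.St) : Prop :=
  ∃ s, M.IsIrStrat A s ∧ ∀ lam, M.InOutIr A s q lam →
    ∃ i, lam i ∈ P ∧ ∀ j < i, lam j ∈ S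

/-- Perfect-information next-step operator `N^Ir_A(X)`. -/
def NextPI (A : Set M.Agt) (X : Set M.St) : Set M.St :=
  {q | ∃ t, M.IsIrStratPI A t ∧ ∀ lam, M.InOut A t q lam → lam 1 ∈ X}

/-- Perfect-information "globally" operator `G^Ir_A(X)`. -/
def GloballyPI (A : Set M.Agt) (X : Set M.St) : Set M.St :=
  {q | ∃ t, M.IsIrStratPI A t ∧ ∀ lam, M.InOut A t q lam → ∀ i, lam i ∈ X}

/-- Perfect-information "until" operator `U^Ir_A(Y, X)`. -/
def UntilPI (A : Set M.Agt) (Y X : Set M.St) : Set M.St :=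
  {q | ∃ t, M.IsIrStratPI A t ∧ ∀ lam, M.InOut A t q lam →
    ∃ i, lam i ∈ X ∧ ∀ j < i, lam j ∈ Y}

end CEGS

/-- Knaster–Tarski least fixpoint of a set operator. -/
def lfpSet {σ : Type} (f : Set σ → Set σ) : Set σ := sInf {X | f X ⊆ X}

/-- Knaster–Tarski greatest fixpoint of a set operator. -/
def gfpSet {σ : Type} (f : Set σ → Set σ) : Set σ := sSup {X | X ⊆ f X}


namespace SteadAux

open OrdinalApprox

variable (M : CEGS)

/-! ### Basic lemmas about the epistemic relations -/

lemma simE_symm {A : Set M.Agt} {q q' : M.St} (h : M.simE A q q') : M.simE A q' q := by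
  obtain ⟨a, ha, h⟩ := h
  exact ⟨a, ha, (M.sim_equiv a).symm h⟩

lemma simC_symm {A : Set M.Agt} {q q' : M.St} (h : M.simC A q q') : M.simC A q' q := by
  induction h with
  | single h => exact Relation.TransGen.single (simE_symm M h)
  | tail _ h ih => exact Relation.TransGen.head (simE_symm M h) ih

def classOf (A : Set M.Agt) (q : M.St) : Set M.St := {z | M.simC A q z}

lemma classOf_eq {A : Set M.Agt} {q q' : M.St} (h : M.simC A q q') :
    classOf M A q = classOf M A q' := by
  ext z
  exact ⟨fun hz => Relation.TransGen.trans (simC_symm M h) hz,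
         fun hz => Relation.TransGen.trans h hz⟩

/-! ### A default uniform strategy -/

def setoidOf (a : M.Agt) : Setoid M.St := ⟨M.sim a, M.sim_equiv a⟩

noncomputable def dflt : M.Agt → M.St → M.Act := fun a q =>
  (M.d_ne a (Quotient.mk (setoidOf M a) q).out).some

lemma dflt_avail (a : M.Agt) (q : M.St) : dflt M a q ∈ M.d a q := by
  have h : M.sim a (Quotient.mk (setoidOf M a) q).out q := Quotient.mk_out (s := setoidOf M a) q
  have hd := M.uniform a _ _ h
  rw [← hd]
  exact (M.d_ne a _).some_mem

lemma dflt_uniform (a : M.Agt) (q q' : M.St) (h : M.sim a q q') : dflt M a q = dflt M a q' :=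
  congrArg (fun c : Quotient (setoidOf M a) => (M.d_ne a c.out).some)
    (@Quotient.sound _ (setoidOf M a) q q' h)

lemma dflt_isIrStrat (A : Set M.Agt) : M.IsIrStrat A (dflt M) :=
  fun a _ => ⟨dflt_avail M a, dflt_uniform M a⟩

/-! ### The monotone operator -/

lemma reachSet_mono {A : Set M.Agt} {s : M.Agt → M.St → M.Act} {Q X Y : Set M.St} (h : X ⊆ Y) :
    M.ReachSet A s Q X ⊆ M.ReachSet A s Q Y := by
  rintro q ⟨hq, hr⟩
  refine ⟨hq, fun lam hlam => ?_⟩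
  obtain ⟨i, hi, hj⟩ := hr lam hlam
  exact ⟨i, h hi, hj⟩

lemma nextStead_mono {A : Set M.Agt} {X Y : Set M.St} (h : X ⊆ Y) :
    M.NextStead A X ⊆ M.NextStead A Y := by
  rintro q ⟨s, hs, hr⟩
  refine ⟨s, hs, Set.Subset.antisymm (fun z hz => hz.1) ?_⟩
  exact fun z hz => reachSet_mono M h (hr.ge hz)

def fop (A : Set M.Agt) (P S : Set M.St) : Set M.St →o Set M.St :=
  ⟨fun X => M.EKnow A P ∪ (M.CKnow A S ∩ M.NextStead A X),
   fun X Y h => Set.union_subset_union_right _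
     (Set.inter_subset_inter_right _ (nextStead_mono M h))⟩

/-! ### Unfolding the ordinal approximation -/

lemma mem_lfpApprox_elim {σ : Type} (f : Set σ →o Set σ) {α : Ordinal} {q : σ}
    (h : q ∈ lfpApprox f ⊥ α) : ∃ β < α, q ∈ f (lfpApprox f ⊥ β) := by
  rw [lfpApprox] at h
  simp only [Set.sup_eq_union, Set.bot_eq_empty, Set.empty_union, Set.iSup_eq_iUnion,
    Set.mem_iUnion, exists_prop] at h
  exact h

/-! ### The strategy for each common-knowledge class -/

def GoodC (A : Set M.Agt) (P S : Set M.St) (c : Set M.St) (β : Ordinal) : Prop :=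
  ∃ x ∈ c, x ∈ M.CKnow A S ∧ x ∈ M.NextStead A (lfpApprox (fop M A P S) ⊥ β)

lemma goodC_pack (A : Set M.Agt) (P S : Set M.St) (c : Set M.St)
    (h : {β | GoodC M A P S c β}.Nonempty) :
    ∃ s : M.Agt → M.St → M.Act, ∃ x ∈ c, x ∈ M.CKnow A S ∧ M.IsIrStrat A s ∧
      M.ReachSet A s {q' | M.simC A x q'}
        (lfpApprox (fop M A P S) ⊥ (sInf {β | GoodC M A P S c β})) =
      {q' | M.simC A x q'} := by
  obtain ⟨x, hx, hck, hns⟩ :=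
    (csInf_mem h : sInf {β | GoodC M A P S c β} ∈ {β | GoodC M A P S c β})
  have hns' : ∃ s, M.IsIrStrat A s ∧
      M.ReachSet A s {q' | M.simC A x q'}
        (lfpApprox (fop M A P S) ⊥ (sInf {β | GoodC M A P S c β})) =
      {q' | M.simC A x q'} := hns
  obtain ⟨s, hs, hr⟩ := hns'
  exact ⟨s, x, hx, hck, hs, hr⟩

open Classical in
noncomputable def stratFor (A : Set M.Agt) (P S : Set M.St) (c : Set M.St) :
    M.Agt → M.St → M.Act :=
  if h : {β | GoodC M A P S c β}.Nonempty then (goodC_pack M A P S c h).choose else dflt M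

lemma stratFor_spec (A : Set M.Agt) (P S : Set M.St) (c : Set M.St)
    (h : {β | GoodC M A P S c β}.Nonempty) :
    ∃ x ∈ c, x ∈ M.CKnow A S ∧ M.IsIrStrat A (stratFor M A P S c) ∧
      M.ReachSet A (stratFor M A P S c) {q' | M.simC A x q'}
        (lfpApprox (fop M A P S) ⊥ (sInf {β | GoodC M A P S c β})) =
      {q' | M.simC A x q'} := by
  classical
  rw [stratFor, dif_pos h]
  exact (goodC_pack M A P S c h).choose_spec

lemma stratFor_isIrStrat (A : Set M.Agt) (P S : Set M.St) (c : Set M.St) :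
    M.IsIrStrat A (stratFor M A P S c) := by
  classical
  rw [stratFor]
  split
  · next h =>
    obtain ⟨x, _, _, hs, _⟩ := (goodC_pack M A P S c h).choose_spec
    exact hs
  · exact dflt_isIrStrat M A

/-! ### The global strategy -/

noncomputable def sStar (A : Set M.Agt) (P S : Set M.St) : M.Agt → M.St → M.Act :=
  fun a y => stratFor M A P S (classOf M A y) a y

lemma sStar_isIrStrat (A : Set M.Agt) (P S : Set M.St) : M.IsIrStrat A (sStar M A P S) := by
  intro a ha
  constructor
  · intro q
    exact (stratFor_isIrStrat M A P S (classOf M A q) a ha).1 q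
  · intro q q' hqq'
    have hc : classOf M A q = classOf M A q' :=
      classOf_eq M (Relation.TransGen.single ⟨a, ha, hqq'⟩)
    show stratFor M A P S (classOf M A q) a q = stratFor M A P S (classOf M A q') a q'
    rw [← hc]
    exact (stratFor_isIrStrat M A P S (classOf M A q) a ha).2 q q' hqq'

lemma sStar_eq_on_class {A : Set M.Agt} (P S : Set M.St) {q y : M.St} (h : M.simC A q y)
    (a : M.Agt) : sStar M A P S a y = stratFor M A P S (classOf M A q) a y := by
  show stratFor M A P S (classOf M A y) a y = stratFor M A P S (classOf M A q) a y
  rw [← classOf_eq M h]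

/-! ### Path shifting and extension -/

lemma inOut_shift {A : Set M.Agt} {s : M.Agt → M.St → M.Act} {q : M.St} {lam : ℕ → M.St}
    (h : M.InOut A s q lam) (i : ℕ) : M.InOut A s (lam i) (fun k => lam (i + k)) :=
  ⟨rfl, fun k => h.2 (i + k)⟩

open Classical in
noncomputable def extProf (A : Set M.Agt) (s : M.Agt → M.St → M.Act) (y : M.St) :
    M.Agt → M.Act :=
  fun a => if a ∈ A then s a y else (M.d_ne a y).some

noncomputable def extPath (A : Set M.Agt) (s : M.Agt → M.St → M.Act) (lam : ℕ → M.St)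
    (n : ℕ) : ℕ → M.St :=
  fun k => Nat.rec (lam 0)
    (fun k ih => if k + 1 ≤ n then lam (k + 1) else M.o ih (extProf M A s ih)) k

lemma extPath_zero (A : Set M.Agt) (s : M.Agt → M.St → M.Act) (lam : ℕ → M.St) (n : ℕ) :
    extPath M A s lam n 0 = lam 0 := rfl

lemma extPath_succ (A : Set M.Agt) (s : M.Agt → M.St → M.Act) (lam : ℕ → M.St) (n k : ℕ) :
    extPath M A s lam n (k + 1) = if k + 1 ≤ n then lam (k + 1)
      else M.o (extPath M A s lam n k) (extProf M A s (extPath M A s lam n k)) := rfl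

lemma extPath_eq_of_le (A : Set M.Agt) (s : M.Agt → M.St → M.Act) (lam : ℕ → M.St) (n : ℕ) :
    ∀ k, k ≤ n → extPath M A s lam n k = lam k := by
  intro k hk
  cases k with
  | zero => rfl
  | succ k => rw [extPath_succ, if_pos hk]

lemma extPath_inOut (A : Set M.Agt) {s : M.Agt → M.St → M.Act}
    (hs : ∀ a ∈ A, ∀ q, s a q ∈ M.d a q) (lam : ℕ → M.St) (n : ℕ)
    (hstep : ∀ k < n, ∃ αp, M.Avail (lam k) αp ∧ (∀ a ∈ A, αp a = s a (lam k)) ∧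
      lam (k + 1) = M.o (lam k) αp) :
    M.InOut A s (lam 0) (extPath M A s lam n) := by
  classical
  refine ⟨rfl, fun k => ?_⟩
  by_cases hk : k + 1 ≤ n
  · have hk' : k < n := hk
    have he : extPath M A s lam n k = lam k := extPath_eq_of_le M A s lam n k (Nat.le_of_lt hk')
    have he2 : extPath M A s lam n (k + 1) = lam (k + 1) := extPath_eq_of_le M A s lam n _ hk
    rw [he, he2]
    exact hstep k hk'
  · refine ⟨extProf M A s (extPath M A s lam n k), ?_, ?_, ?_⟩
    · intro a
      by_cases hA : a ∈ A
      · simpa [extProf, hA] using hs a hA _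
      · simpa [extProf, hA] using (M.d_ne a _).some_mem
    · intro a ha
      simp [extProf, ha]
    · rw [extPath_succ, if_neg hk]

/-! ### The main induction -/

lemma main (A : Set M.Agt) (P S : Set M.St) (α : Ordinal) :
    ∀ q ∈ fop M A P S (lfpApprox (fop M A P S) ⊥ α),
      ∀ lam, M.InOutIr A (sStar M A P S) q lam →
        ∃ i, lam i ∈ P ∧ ∀ j < i, lam j ∈ S := by
  induction α using Ordinal.induction with
  | h α IH =>
  intro q hq lam hlam
  classical
  obtain ⟨a, ha, q'', hqq'', hIn⟩ := hlam
  rcases hq with hq | ⟨hqS, hqN⟩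
  · refine ⟨0, ?_, fun j hj => absurd hj (Nat.not_lt_zero j)⟩
    rw [hIn.1]
    exact hq q'' ⟨a, ha, hqq''⟩
  · have hqmem : q ∈ classOf M A q := Relation.TransGen.single ⟨a, ha, (M.sim_equiv a).refl q⟩
    have hαmem : GoodC M A P S (classOf M A q) α := ⟨q, hqmem, hqS, hqN⟩
    have hcnon : {β | GoodC M A P S (classOf M A q) β}.Nonempty := ⟨α, hαmem⟩
    obtain ⟨x, hxc, hxS, hsIr, hReach⟩ := stratFor_spec M A P S (classOf M A q) hcnon
    have hqx : M.simC A q x := hxc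
    have hcx : {q' | M.simC A x q'} = classOf M A q :=
      Set.ext fun z => ⟨fun hz => Relation.TransGen.trans hqx hz,
        fun hz => Relation.TransGen.trans (simC_symm M hqx) hz⟩
    rw [hcx] at hReach
    obtain ⟨β₀, hβ₀le, hReach⟩ : ∃ β₀ ≤ α,
        M.ReachSet A (stratFor M A P S (classOf M A q)) (classOf M A q)
          (lfpApprox (fop M A P S) ⊥ β₀) = classOf M A q :=
      ⟨sInf {β | GoodC M A P S (classOf M A q) β}, csInf_le' hαmem, hReach⟩
    have hxS' : ∀ q', M.simC A x q' → q' ∈ S := hxS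
    have hcS : ∀ z ∈ classOf M A q, z ∈ S := fun z hz =>
      hxS' z (Relation.TransGen.trans (simC_symm M hqx) hz)
    have hq''c : q'' ∈ classOf M A q := Relation.TransGen.single ⟨a, ha, hqq''⟩
    have hagree : ∀ y ∈ classOf M A q, ∀ a',
        sStar M A P S a' y = stratFor M A P S (classOf M A q) a' y :=
      fun y hy a' => sStar_eq_on_class M P S hy a'
    have hq''R : q'' ∈ classOf M A q ∧
        ∀ mu, M.InOut A (stratFor M A P S (classOf M A q)) q'' mu →
          ∃ i, mu i ∈ lfpApprox (fop M A P S) ⊥ β₀ ∧ ∀ j < i, mu j ∈ classOf M A q :=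
      hReach.ge hq''c
    have hEx : ∃ i, lam i ∈ lfpApprox (fop M A P S) ⊥ β₀ ∨ lam i ∉ classOf M A q := by
      by_contra hcon
      push_neg at hcon
      have hInS : M.InOut A (stratFor M A P S (classOf M A q)) q'' lam := by
        refine ⟨hIn.1, fun i => ?_⟩
        obtain ⟨αp, h1, h2, h3⟩ := hIn.2 i
        exact ⟨αp, h1, fun a' ha' => (h2 a' ha').trans (hagree (lam i) (hcon i).2 a'), h3⟩
      obtain ⟨i, hi, _⟩ := hq''R.2 lam hInS
      exact (hcon i).1 hi
    obtain ⟨i₀, hi₀, hpre⟩ : ∃ i₀, (lam i₀ ∈ lfpApprox (fop M A P S) ⊥ β₀ ∨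
        lam i₀ ∉ classOf M A q) ∧ ∀ j < i₀, lam j ∈ classOf M A q ∧
          lam j ∉ lfpApprox (fop M A P S) ⊥ β₀ :=
      ⟨Nat.find hEx, Nat.find_spec hEx, fun j hj => by
        have := Nat.find_min hEx hj
        push_neg at this
        exact ⟨this.2, this.1⟩⟩
    by_cases hhit : lam i₀ ∈ lfpApprox (fop M A P S) ⊥ β₀
    · obtain ⟨β', hβ', hmem⟩ := mem_lfpApprox_elim (fop M A P S) hhit
      have hβ'α : β' < α := lt_of_lt_of_le hβ' hβ₀le
      have hIr : M.InOutIr A (sStar M A P S) (lam i₀) (fun k => lam (i₀ + k)) :=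
        ⟨a, ha, lam i₀, (M.sim_equiv a).refl _, inOut_shift M hIn i₀⟩
      obtain ⟨j, hjP, hjS⟩ := IH β' hβ'α (lam i₀) hmem _ hIr
      refine ⟨i₀ + j, hjP, fun k hk => ?_⟩
      rcases lt_or_ge k i₀ with hk' | hk'
      · exact hcS _ (hpre k hk').1
      · have h1 : k - i₀ < j := by omega
        have h2 : i₀ + (k - i₀) = k := by omega
        have := hjS (k - i₀) h1
        rwa [h2] at this
    · have hout : lam i₀ ∉ classOf M A q := hi₀.resolve_left hhit
      exfalso
      have hstep : ∀ k < i₀, ∃ αp, M.Avail (lam k) αp ∧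
          (∀ a' ∈ A, αp a' = stratFor M A P S (classOf M A q) a' (lam k)) ∧
          lam (k + 1) = M.o (lam k) αp := by
        intro k hk
        obtain ⟨αp, h1, h2, h3⟩ := hIn.2 k
        exact ⟨αp, h1, fun a' ha' => (h2 a' ha').trans (hagree (lam k) (hpre k hk).1 a'), h3⟩
      have hμ : M.InOut A (stratFor M A P S (classOf M A q)) (lam 0)
          (extPath M A (stratFor M A P S (classOf M A q)) lam i₀) :=
        extPath_inOut M A (fun a' ha' => (hsIr a' ha').1) lam i₀ hstep
      rw [hIn.1] at hμ
      obtain ⟨i, hiX, hjQ⟩ := hq''R.2 _ hμ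
      rcases lt_trichotomy i i₀ with hlt | heq | hgt
      · rw [extPath_eq_of_le M A _ lam i₀ i (Nat.le_of_lt hlt)] at hiX
        exact (hpre i hlt).2 hiX
      · rw [heq, extPath_eq_of_le M A _ lam i₀ i₀ le_rfl] at hiX
        exact hhit hiX
      · have := hjQ i₀ hgt
        rw [extPath_eq_of_le M A _ lam i₀ i₀ le_rfl] at this
        exact hout this

end SteadAux

/-- the fixpoint `μX.(E_A P ∪ (C_A S ∩ ⟨A⟩•X))` is a lower bound for the
ATLir "until" ability `⟨⟨A⟩⟩ S U P`. -/
theorem steadfast_lfp_lower_bound_until (M : CEGS) (A : Set M.Agt) (P S : Set M.St)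
    (q : M.St)
    (h : q ∈ lfpSet (fun X => M.EKnow A P ∪ (M.CKnow A S ∩ M.NextStead A X))) :
    M.CanUntil A S P q := by
  classical
  have hq2 : q ∈ OrderHom.lfp (SteadAux.fop M A P S) := h
  have hq3 : q ∈ SteadAux.fop M A P S (OrderHom.lfp (SteadAux.fop M A P S)) := by
    rw [OrderHom.map_lfp]; exact hq2
  have hq4 : q ∈ SteadAux.fop M A P S (OrdinalApprox.lfpApprox (SteadAux.fop M A P S) ⊥
      (Cardinal.ord (Order.succ (Cardinal.mk (Set M.St))))) := by
    rw [OrdinalApprox.lfpApprox_ord_eq_lfp]; exact hq3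
  exact ⟨SteadAux.sStar M A P S, SteadAux.sStar_isIrStrat M A P S,
    fun lam hlam => SteadAux.main M A P S _ q hq4 lam hlam⟩
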